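/- Let H be a nonnegative random variable, b ≥ 0, λ > 0, N ≥ 1, u ≥ 0, and let θ = E[e^{-bH}]. With M_CS and M_BS denoting the second moments E[I²] under the Conditional Sleep and Bernoulli Sleep schemes (Eqs. (29) and (21)) with the same θ, M_CS - M_BS = -2(E[H]E[e^{-bH}] - E[He^{-bH}])·((N-1)/λ + u) ≤ 0, hence E[Δ^CS] ≤ E[Δ^BS]. -/
import Mathlib


open MeasureTheory

lemma cheb_assoc {Ω : Type*} [MeasureSpace Ω] {μ : Measure Ω} [IsProbabilityMeasure μ]
    (H : Ω → ℝ) (hH0 : ∀ ω, 0 ≤ H ω) (hHm : Measurable H) (hHi : Integrable H μ)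
    (b : ℝ) (hb : 0 ≤ b) :
    ∫ ω, H ω * Real.exp (-b * H ω) ∂μ
      ≤ (∫ ω, H ω ∂μ) * ∫ ω, Real.exp (-b * H ω) ∂μ := by
  set g : Ω → ℝ := fun ω => Real.exp (-b * H ω) with hg
  have hgm : Measurable g := (hHm.const_mul (-b)).exp
  have hgb : ∀ ω, ‖g ω‖ ≤ 1 := by
    intro ω
    rw [Real.norm_eq_abs, abs_of_pos (Real.exp_pos _)]
    apply Real.exp_le_one_iff.2
    have := mul_nonneg hb (hH0 ω)
    linarith
  have hgi : Integrable g μ := by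
    refine (integrable_const (1 : ℝ)).mono' hgm.aestronglyMeasurable ?_
    exact Filter.Eventually.of_forall hgb
  have hHgi : Integrable (fun ω => H ω * g ω) μ := by
    have h := hHi.bdd_mul (c := 1) hgm.aestronglyMeasurable
      (Filter.Eventually.of_forall hgb)
    simpa [mul_comm] using h
  -- product measure argument
  have i1 : Integrable (fun p : Ω × Ω => H p.1 * g p.2) (μ.prod μ) := hHi.mul_prod hgi
  have i2 : Integrable (fun p : Ω × Ω => H p.2 * g p.1) (μ.prod μ) := by
    have := hgi.mul_prod hHi
    simpa [mul_comm] using this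
  have i3 : Integrable (fun p : Ω × Ω => H p.1 * g p.1) (μ.prod μ) := by
    have := hHgi.mul_prod (integrable_const (μ := μ) (1 : ℝ))
    simpa using this
  have i4 : Integrable (fun p : Ω × Ω => H p.2 * g p.2) (μ.prod μ) := by
    have := (integrable_const (μ := μ) (1 : ℝ)).mul_prod hHgi
    simpa using this
  have key : 0 ≤ ∫ p : Ω × Ω, (H p.1 - H p.2) * (g p.2 - g p.1) ∂(μ.prod μ) := by
    refine integral_nonneg fun p => ?_
    show (0:ℝ) ≤ (H p.1 - H p.2) * (g p.2 - g p.1)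
    rcases le_total (H p.1) (H p.2) with h | h
    · have : g p.2 ≤ g p.1 := Real.exp_le_exp.2 (by nlinarith)
      nlinarith [mul_nonneg (by linarith : (0:ℝ) ≤ H p.2 - H p.1)
        (by linarith : (0:ℝ) ≤ g p.1 - g p.2)]
    · have : g p.1 ≤ g p.2 := Real.exp_le_exp.2 (by nlinarith)
      exact mul_nonneg (by linarith) (by linarith)
  have expand : ∫ p : Ω × Ω, (H p.1 - H p.2) * (g p.2 - g p.1) ∂(μ.prod μ)
      = (∫ p : Ω × Ω, H p.1 * g p.2 ∂(μ.prod μ))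
        + (∫ p : Ω × Ω, H p.2 * g p.1 ∂(μ.prod μ))
        - (∫ p : Ω × Ω, H p.1 * g p.1 ∂(μ.prod μ))
        - (∫ p : Ω × Ω, H p.2 * g p.2 ∂(μ.prod μ)) := by
    have hfun : (fun p : Ω × Ω => (H p.1 - H p.2) * (g p.2 - g p.1))
        = fun p : Ω × Ω => (H p.1 * g p.2 + H p.2 * g p.1)
          - (H p.1 * g p.1 + H p.2 * g p.2) := by
      funext p; ring
    have iA : Integrable (fun p : Ω × Ω => H p.1 * g p.2 + H p.2 * g p.1) (μ.prod μ) :=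
      i1.add i2
    have iB : Integrable (fun p : Ω × Ω => H p.1 * g p.1 + H p.2 * g p.2) (μ.prod μ) :=
      i3.add i4
    rw [hfun, integral_sub iA iB, integral_add i1 i2, integral_add i3 i4]
    ring
  have v1 : ∫ p : Ω × Ω, H p.1 * g p.2 ∂(μ.prod μ) = (∫ ω, H ω ∂μ) * ∫ ω, g ω ∂μ :=
    integral_prod_mul H g
  have v2 : ∫ p : Ω × Ω, H p.2 * g p.1 ∂(μ.prod μ) = (∫ ω, H ω ∂μ) * ∫ ω, g ω ∂μ := by
    rw [show (fun p : Ω × Ω => H p.2 * g p.1) = fun p : Ω × Ω => g p.1 * H p.2 by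
      funext p; ring, integral_prod_mul g H]
    ring
  have v3 : ∫ p : Ω × Ω, H p.1 * g p.1 ∂(μ.prod μ) = ∫ ω, H ω * g ω ∂μ := by
    have := integral_prod_mul (μ := μ) (ν := μ) (fun ω => H ω * g ω) (fun _ => (1 : ℝ))
    simpa using this
  have v4 : ∫ p : Ω × Ω, H p.2 * g p.2 ∂(μ.prod μ) = ∫ ω, H ω * g ω ∂μ := by
    have := integral_prod_mul (μ := μ) (ν := μ) (fun _ => (1 : ℝ)) (fun ω => H ω * g ω)
    simpa using this
  rw [expand, v1, v2, v3, v4] at key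
  linarith

/-- Comparison of the second moments of the informative inter-departure interval
under the Conditional Sleep scheme (Eq. (29)) and the Bernoulli Sleep scheme
(Eq. (21)) with the same sleeping probability `θ = E[e^{-bH}]`:
`M_CS - M_BS = -2(E[H]E[e^{-bH}] - E[He^{-bH}])·((N-1)/λ + u) ≤ 0`,
hence `E[Δ^CS] ≤ E[Δ^BS]`. -/
theorem stmt_10 {Ω : Type*} [MeasureSpace Ω] {μ : Measure Ω} [IsProbabilityMeasure μ]
    (H : Ω → ℝ) (hH0 : ∀ ω, 0 ≤ H ω) (hHm : Measurable H)
    (hHi : Integrable H μ) (hH2 : Integrable (fun ω => H ω ^ 2) μ)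
    (b lam N u u₂ : ℝ) (hb : 0 ≤ b) (hlam : 0 < lam) (hN : 1 ≤ N)
    (hu : 0 ≤ u) (hu2 : u ^ 2 ≤ u₂) :
    let EH : ℝ := ∫ ω, H ω ∂μ
    let EH2 : ℝ := ∫ ω, H ω ^ 2 ∂μ
    let θ : ℝ := ∫ ω, Real.exp (-b * H ω) ∂μ
    let Hb : ℝ := ∫ ω, H ω * Real.exp (-b * H ω) ∂μ
    let MCS : ℝ := 2 * (EH - Hb) / lam + 2 * (1 - θ) / lam ^ 2 + 2 * Hb * N / lam
      + 2 * Hb * u + N * (N + 1) * θ / lam ^ 2 + 2 * θ * N * u / lam + θ * u₂ + EH2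
    let MBS : ℝ := 2 * EH * ((1 - θ + N * θ) / lam + θ * u)
      + 2 * (1 - θ) / lam ^ 2 + θ * N * (N + 1) / lam ^ 2 + EH2
      + 2 * θ * N * u / lam + θ * u₂
    MCS - MBS = -(2 * (EH * θ - Hb) * ((N - 1) / lam + u)) ∧ MCS ≤ MBS := by
  intro EH EH2 θ Hb MCS MBS
  have hlam' : lam ≠ 0 := ne_of_gt hlam
  have hcheb : Hb ≤ EH * θ := cheb_assoc H hH0 hHm hHi b hb
  have hid : MCS - MBS = -(2 * (EH * θ - Hb) * ((N - 1) / lam + u)) := by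
    simp only [MCS, MBS]
    field_simp
    ring
  refine ⟨hid, ?_⟩
  have hfac : 0 ≤ (N - 1) / lam + u := by
    have : 0 ≤ (N - 1) / lam := div_nonneg (by linarith) hlam.le
    linarith
  have h0 : 0 ≤ 2 * (EH * θ - Hb) * ((N - 1) / lam + u) :=
    mul_nonneg (mul_nonneg (by norm_num) (by linarith)) hfac
  have hle : MCS - MBS ≤ 0 := by rw [hid]; linarith
  linarith
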